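/- Let μ be a nonnegative measure on ℝ^d satisfying ∫_{ℝ^d} (1 + |ξ|^{2β})^{-1} μ(dξ) < ∞ for some β ∈ (0,2], and let t > 0. Then the double integral ∫_0^t ∫_0^t ∫_{ℝ^d} (|ξ|⁴/4) e^{-(2t-s-s')|ξ|²/2} |t - (s ∧ s')|^β μ(dξ) ds ds' is finite. -/

import Mathlib

open MeasureTheory Real
open scoped ENNReal

lemma aux1 {β u : ℝ} (hβ : 0 < β) (hβ2 : β ≤ 2) (hu : 0 ≤ u) :
    u ^ β * Real.exp (-u) ≤ 27 := by
  rcases le_total u 1 with h | h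
  · have h1 : u ^ β ≤ 1 := Real.rpow_le_one hu h hβ.le
    have h2 : Real.exp (-u) ≤ 1 := Real.exp_le_one_iff.2 (by linarith)
    nlinarith [Real.rpow_nonneg hu β, Real.exp_pos (-u)]
  · have h1 : u ^ β ≤ u ^ (2:ℝ) := Real.rpow_le_rpow_of_exponent_le h hβ2
    have h2 : u ^ (2:ℝ) = u ^ 2 := by
      rw [show ((2:ℝ)) = ((2:ℕ):ℝ) by norm_num, Real.rpow_natCast]
    have h3 : u / 3 + 1 ≤ Real.exp (u/3) := Real.add_one_le_exp _
    have h4 : Real.exp u = Real.exp (u/3) ^ 3 := by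
      rw [← Real.exp_nat_mul]; norm_num; ring
    have h5 : u ^ 2 ≤ 27 * Real.exp u := by
      have h3' := pow_le_pow_left₀ (by linarith : (0:ℝ) ≤ u/3 + 1) h3 3
      rw [h4]; nlinarith [h3', Real.exp_pos (u/3)]
    have h6 : Real.exp (-u) = (Real.exp u)⁻¹ := Real.exp_neg u
    rw [h6]
    rw [mul_inv_le_iff₀ (Real.exp_pos u)]
    calc u ^ β ≤ u ^ (2:ℝ) := h1
      _ = u ^ 2 := h2
      _ ≤ 27 * Real.exp u := h5

lemma aux2 {t : ℝ} (ht : 0 < t) {c : ℝ} (hc : 0 < c) :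
    ∫⁻ s in Set.Icc (0:ℝ) t, ENNReal.ofReal (Real.exp (-(t - s) * c)) ≤ ENNReal.ofReal c⁻¹ := by
  have hcont : Continuous fun s : ℝ => Real.exp (-(t - s) * c) := by continuity
  have hint : IntegrableOn (fun s : ℝ => Real.exp (-(t - s) * c)) (Set.Icc 0 t) :=
    hcont.integrableOn_Icc
  rw [← ofReal_integral_eq_lintegral_ofReal hint (ae_of_all _ fun s => (Real.exp_pos _).le)]
  apply ENNReal.ofReal_le_ofReal
  have hF : ∀ x : ℝ, HasDerivAt (fun y : ℝ => Real.exp (-(t - y) * c) / c)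
      (Real.exp (-(t - x) * c)) x := by
    intro x
    have h0 : HasDerivAt (fun y : ℝ => (y - t) * c) (1 * c) x :=
      ((hasDerivAt_id x).sub_const t).mul_const c
    have he : (fun y : ℝ => -(t - y) * c) = fun y : ℝ => (y - t) * c := by funext y; ring
    have h1 : HasDerivAt (fun y : ℝ => -(t - y) * c) c x := by rw [he]; simpa using h0
    have h2 := h1.exp
    have h3 := h2.div_const c
    have : Real.exp (-(t - x) * c) * c / c = Real.exp (-(t - x) * c) :=
      mul_div_cancel_right₀ _ hc.ne'
    rwa [this] at h3
  have hI : ∫ s in Set.Icc (0:ℝ) t, Real.exp (-(t - s) * c)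
      = Real.exp (-(t - t) * c) / c - Real.exp (-(t - 0) * c) / c := by
    rw [MeasureTheory.integral_Icc_eq_integral_Ioc, ← intervalIntegral.integral_of_le ht.le]
    exact intervalIntegral.integral_eq_sub_of_hasDerivAt (fun x _ => hF x)
      (hcont.intervalIntegrable _ _)
  rw [hI]
  have : Real.exp (-(t - t) * c) = 1 := by simp
  rw [this]
  have h2 : 0 ≤ Real.exp (-(t - 0) * c) / c := by positivity
  rw [one_div] at *
  linarith [div_nonneg (Real.exp_pos (-(t-0)*c)).le hc.le,
    (by rw [one_div] : (1:ℝ)/c = c⁻¹)]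

lemma ptbound {β t s s' n : ℝ} (hβ : 0 < β) (hβ2 : β ≤ 2)
    (hs : s ∈ Set.Icc (0:ℝ) t) (hs' : s' ∈ Set.Icc (0:ℝ) t) (hn : 1 ≤ n) :
    n ^ 4 / 4 * Real.exp (-(2 * t - s - s') * n ^ 2 / 2) * |t - min s s'| ^ β ≤
      108 * n ^ 4 * (n ^ (2 * β))⁻¹ *
        (Real.exp (-(t - s) * (n ^ 2 / 4)) * Real.exp (-(t - s') * (n ^ 2 / 4))) := by
  obtain ⟨hs0, hst⟩ := hs
  obtain ⟨hs'0, hs't⟩ := hs'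
  have hn0 : (0:ℝ) < n := lt_of_lt_of_le one_pos hn
  set r : ℝ := t - min s s' with hr_def
  have hr0 : 0 ≤ r := by rcases le_total s s' with h | h <;> simp [hr_def, min_eq_left, min_eq_right, h] <;> linarith
  have habs : |t - min s s'| = r := abs_of_nonneg hr0
  have hrle : r ≤ 2 * t - s - s' := by
    rcases le_total s s' with h | h <;> simp [hr_def, min_eq_left, min_eq_right, h] <;> linarith
  -- split the exponential
  have hsplit : Real.exp (-(2 * t - s - s') * n ^ 2 / 2) =
      Real.exp (-(t - s) * (n ^ 2 / 4)) * Real.exp (-(t - s') * (n ^ 2 / 4)) *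
        Real.exp (-((2 * t - s - s') * (n ^ 2 / 4))) := by
    rw [← Real.exp_add, ← Real.exp_add]; congr 1; ring
  -- key bound :  r ^ β * exp(-(2t-s-s') n²/4) ≤ 432 (n^(2β))⁻¹
  have hc : (0:ℝ) < n ^ 2 / 4 := by positivity
  have hkey : r ^ β * Real.exp (-((2 * t - s - s') * (n ^ 2 / 4))) ≤ 432 * (n ^ (2 * β))⁻¹ := by
    have h1 : Real.exp (-((2 * t - s - s') * (n ^ 2 / 4))) ≤ Real.exp (-(r * (n ^ 2 / 4))) := by
      apply Real.exp_le_exp.2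
      have := mul_le_mul_of_nonneg_right hrle hc.le
      linarith
    have h2 : r ^ β * Real.exp (-(r * (n ^ 2 / 4))) ≤ 432 * (n ^ (2 * β))⁻¹ := by
      set u : ℝ := r * (n ^ 2 / 4) with hu_def
      have hu0 : 0 ≤ u := by positivity
      have hru : r = u / (n ^ 2 / 4) := by field_simp [hu_def]; rw [hu_def]; ring
      have hrpow : r ^ β = u ^ β / (n ^ 2 / 4) ^ β := by
        rw [hru, Real.div_rpow hu0 hc.le]
      have haux := aux1 hβ hβ2 hu0
      -- (n^2/4)^β ≥ n^(2β)/16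
      have hden : n ^ (2 * β) / 16 ≤ (n ^ 2 / 4) ^ β := by
        rw [Real.div_rpow (by positivity) (by norm_num : (0:ℝ) ≤ 4)]
        have h4 : (4:ℝ) ^ β ≤ 16 := by
          calc (4:ℝ) ^ β ≤ 4 ^ (2:ℝ) := Real.rpow_le_rpow_of_exponent_le (by norm_num) hβ2
            _ = 16 := by
              rw [show ((2:ℝ)) = ((2:ℕ):ℝ) by norm_num, Real.rpow_natCast]; norm_num
        have hnum : (n ^ 2 : ℝ) ^ β = n ^ (2 * β) := by
          rw [← Real.rpow_natCast n 2, ← Real.rpow_mul hn0.le]; norm_num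
        rw [hnum]
        apply div_le_div_of_nonneg_left (by positivity) (by positivity) h4
      have hpos : (0:ℝ) < (n ^ 2 / 4) ^ β := Real.rpow_pos_of_pos hc β
      calc r ^ β * Real.exp (-(r * (n ^ 2 / 4)))
          = u ^ β * Real.exp (-u) / (n ^ 2 / 4) ^ β := by rw [hrpow]; ring
        _ ≤ 27 / (n ^ 2 / 4) ^ β := by
            gcongr
        _ ≤ 27 / (n ^ (2 * β) / 16) := by
            gcongr
        _ = 432 * (n ^ (2 * β))⁻¹ := by
            rw [div_div_eq_mul_div]; ring
    calc r ^ β * Real.exp (-((2 * t - s - s') * (n ^ 2 / 4)))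
        ≤ r ^ β * Real.exp (-(r * (n ^ 2 / 4))) := by
          apply mul_le_mul_of_nonneg_left h1 (Real.rpow_nonneg hr0 β)
      _ ≤ 432 * (n ^ (2 * β))⁻¹ := h2
  rw [habs, hsplit]
  have e1 := (Real.exp_pos (-(t - s) * (n ^ 2 / 4))).le
  have e2 := (Real.exp_pos (-(t - s') * (n ^ 2 / 4))).le
  have hn4 : (0:ℝ) ≤ n ^ 4 / 4 := by positivity
  calc n ^ 4 / 4 * (Real.exp (-(t - s) * (n ^ 2 / 4)) * Real.exp (-(t - s') * (n ^ 2 / 4)) *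
        Real.exp (-((2 * t - s - s') * (n ^ 2 / 4)))) * r ^ β
      = (r ^ β * Real.exp (-((2 * t - s - s') * (n ^ 2 / 4)))) *
          (n ^ 4 / 4 * (Real.exp (-(t - s) * (n ^ 2 / 4)) * Real.exp (-(t - s') * (n ^ 2 / 4)))) := by
        ring
    _ ≤ (432 * (n ^ (2 * β))⁻¹) *
          (n ^ 4 / 4 * (Real.exp (-(t - s) * (n ^ 2 / 4)) * Real.exp (-(t - s') * (n ^ 2 / 4)))) := by
        apply mul_le_mul_of_nonneg_right hkey (by positivity)
    _ = 108 * n ^ 4 * (n ^ (2 * β))⁻¹ *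
          (Real.exp (-(t - s) * (n ^ 2 / 4)) * Real.exp (-(t - s') * (n ^ 2 / 4))) := by ring

theorem stmt4 (d : ℕ) (β t : ℝ) (hβ : 0 < β) (hβ2 : β ≤ 2) (ht : 0 < t)
    (μ : Measure (EuclideanSpace ℝ (Fin d)))
    (hμ : ∫⁻ ξ, ENNReal.ofReal ((1 + ‖ξ‖ ^ (2 * β))⁻¹) ∂μ < ⊤) :
    ∫⁻ s in Set.Icc (0:ℝ) t, ∫⁻ s' in Set.Icc (0:ℝ) t, ∫⁻ ξ,
      ENNReal.ofReal (‖ξ‖ ^ 4 / 4 * Real.exp (-(2 * t - s - s') * ‖ξ‖ ^ 2 / 2) *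
        |t - min s s'| ^ β) ∂μ < ⊤ := by
  have hβ2' : (0:ℝ) < 2 * β := by linarith
  -- σ-finiteness of μ
  have hwc : Continuous fun ξ : EuclideanSpace ℝ (Fin d) => (1 + ‖ξ‖ ^ (2 * β))⁻¹ := by
    apply Continuous.inv₀
    · exact continuous_const.add (continuous_norm.rpow_const fun ξ => Or.inr hβ2'.le)
    · intro ξ
      have : (0:ℝ) ≤ ‖ξ‖ ^ (2 * β) := Real.rpow_nonneg (norm_nonneg ξ) _
      positivity
  have hwmeas : Measurable fun ξ : EuclideanSpace ℝ (Fin d) =>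
      ENNReal.ofReal ((1 + ‖ξ‖ ^ (2 * β))⁻¹) := hwc.measurable.ennreal_ofReal
  haveI hsf : SFinite μ := by
    have hw0 : ∀ ξ : EuclideanSpace ℝ (Fin d),
        (fun ξ => ENNReal.ofReal ((1 + ‖ξ‖ ^ (2 * β))⁻¹)) ξ ≠ 0 := by
      intro ξ
      have h1 : (0:ℝ) ≤ ‖ξ‖ ^ (2 * β) := Real.rpow_nonneg (norm_nonneg ξ) _
      simp only [ne_eq, ENNReal.ofReal_eq_zero, not_le]
      positivity
    have heq := withDensity_inv_same (μ := μ) hwmeas (ae_of_all _ hw0)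
      (ae_of_all _ fun ξ => ENNReal.ofReal_ne_top)
    haveI : IsFiniteMeasure (μ.withDensity
        (fun ξ => ENNReal.ofReal ((1 + ‖ξ‖ ^ (2 * β))⁻¹))) := by
      constructor
      rw [withDensity_apply _ MeasurableSet.univ, setLIntegral_univ]
      exact hμ
    rw [← heq]
    infer_instance
  -- continuity of the full integrand
  have hgc : Continuous fun p : (ℝ × ℝ) × (EuclideanSpace ℝ (Fin d)) =>
      ‖p.2‖ ^ 4 / 4 * Real.exp (-(2 * t - p.1.1 - p.1.2) * ‖p.2‖ ^ 2 / 2) *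
        |t - min p.1.1 p.1.2| ^ β := by
    apply Continuous.mul
    · apply Continuous.mul
      · exact ((continuous_norm.comp continuous_snd).pow 4).div_const 4
      · apply Real.continuous_exp.comp
        apply Continuous.div_const
        apply Continuous.mul
        · exact ((continuous_const.sub continuous_fst.fst).sub continuous_fst.snd).neg
        · exact (continuous_norm.comp continuous_snd).pow 2
    · exact ((continuous_const.sub (continuous_fst.fst.min continuous_fst.snd)).abs).rpow_const
        fun p => Or.inr hβ.le
  -- key per-ξ bound
  set C : ℝ := t ^ β * t ^ 2 + 3456 with hC_def
  have hC0 : (0:ℝ) ≤ C := by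
    have : (0:ℝ) ≤ t ^ β := Real.rpow_nonneg ht.le β
    positivity
  have keybound : ∀ ξ : EuclideanSpace ℝ (Fin d),
      (∫⁻ s in Set.Icc (0:ℝ) t, ∫⁻ s' in Set.Icc (0:ℝ) t,
        ENNReal.ofReal (‖ξ‖ ^ 4 / 4 * Real.exp (-(2 * t - s - s') * ‖ξ‖ ^ 2 / 2) *
          |t - min s s'| ^ β)) ≤
      ENNReal.ofReal C * ENNReal.ofReal ((1 + ‖ξ‖ ^ (2 * β))⁻¹) := by
    intro ξ
    set n : ℝ := ‖ξ‖ with hn_def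
    have hn0 : 0 ≤ n := norm_nonneg ξ
    have hx0 : (0:ℝ) ≤ n ^ (2 * β) := Real.rpow_nonneg hn0 _
    rcases le_total n 1 with hsmall | hlarge
    · -- small frequencies
      have hx1 : n ^ (2 * β) ≤ 1 := Real.rpow_le_one hn0 hsmall hβ2'.le
      have hptr : ∀ s ∈ Set.Icc (0:ℝ) t, ∀ s' ∈ Set.Icc (0:ℝ) t,
          n ^ 4 / 4 * Real.exp (-(2 * t - s - s') * n ^ 2 / 2) * |t - min s s'| ^ β
            ≤ t ^ β / 4 := by
        intro s hs s' hs'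
        have h1 : n ^ 4 ≤ 1 := pow_le_one₀ hn0 hsmall
        have h2 : Real.exp (-(2 * t - s - s') * n ^ 2 / 2) ≤ 1 := by
          apply Real.exp_le_one_iff.2
          have h3 : 0 ≤ 2 * t - s - s' := by
            have := hs.2; have := hs'.2; linarith
          nlinarith [sq_nonneg n]
        have h4 : |t - min s s'| ^ β ≤ t ^ β := by
          apply Real.rpow_le_rpow (abs_nonneg _) ?_ hβ.le
          rw [abs_of_nonneg]
          · rcases le_total s s' with h | h <;>
              simp [min_eq_left, min_eq_right, h] <;> [linarith [hs.1]; linarith [hs'.1]]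
          · rcases le_total s s' with h | h <;>
              simp [min_eq_left, min_eq_right, h] <;> [linarith [hs.2]; linarith [hs'.2]]
        have hexp0 := (Real.exp_pos (-(2 * t - s - s') * n ^ 2 / 2)).le
        have habs0 : (0:ℝ) ≤ |t - min s s'| ^ β := Real.rpow_nonneg (abs_nonneg _) β
        have htβ : (0:ℝ) ≤ t ^ β := Real.rpow_nonneg ht.le β
        have hA4 : n ^ 4 / 4 * Real.exp (-(2 * t - s - s') * n ^ 2 / 2) ≤ 1 / 4 := by
          calc n ^ 4 / 4 * Real.exp (-(2 * t - s - s') * n ^ 2 / 2) ≤ 1 / 4 * 1 :=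
                mul_le_mul (by linarith) h2 hexp0 (by norm_num)
            _ = 1 / 4 := by ring
        calc n ^ 4 / 4 * Real.exp (-(2 * t - s - s') * n ^ 2 / 2) * |t - min s s'| ^ β
            ≤ 1 / 4 * t ^ β := mul_le_mul hA4 h4 habs0 (by norm_num)
          _ = t ^ β / 4 := by ring
      calc (∫⁻ s in Set.Icc (0:ℝ) t, ∫⁻ s' in Set.Icc (0:ℝ) t,
            ENNReal.ofReal (n ^ 4 / 4 * Real.exp (-(2 * t - s - s') * n ^ 2 / 2) *
              |t - min s s'| ^ β))
          ≤ ∫⁻ _s in Set.Icc (0:ℝ) t, ∫⁻ _s' in Set.Icc (0:ℝ) t,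
              ENNReal.ofReal (t ^ β / 4) := by
            apply setLIntegral_mono' measurableSet_Icc
            intro s hs
            apply setLIntegral_mono' measurableSet_Icc
            intro s' hs'
            exact ENNReal.ofReal_le_ofReal (hptr s hs s' hs')
        _ = ENNReal.ofReal (t ^ β / 4) * ENNReal.ofReal t * ENNReal.ofReal t := by
            rw [setLIntegral_const, setLIntegral_const, Real.volume_Icc, sub_zero]
        _ ≤ ENNReal.ofReal C * ENNReal.ofReal ((1 + n ^ (2 * β))⁻¹) := by
            rw [← ENNReal.ofReal_mul (by positivity), ← ENNReal.ofReal_mul (by positivity),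
              ← ENNReal.ofReal_mul hC0]
            apply ENNReal.ofReal_le_ofReal
            have htβ : (0:ℝ) ≤ t ^ β := Real.rpow_nonneg ht.le β
            have hinv : (2:ℝ)⁻¹ ≤ (1 + n ^ (2 * β))⁻¹ := by
              apply inv_anti₀ (by positivity) (by linarith)
            have h5 : C * (2:ℝ)⁻¹ ≤ C * (1 + n ^ (2 * β))⁻¹ :=
              mul_le_mul_of_nonneg_left hinv hC0
            calc t ^ β / 4 * t * t ≤ C * (2:ℝ)⁻¹ := by
                  rw [hC_def]; nlinarith [mul_nonneg htβ (sq_nonneg t)]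
              _ ≤ C * (1 + n ^ (2 * β))⁻¹ := h5
    · -- large frequencies
      have hn0' : (0:ℝ) < n := lt_of_lt_of_le one_pos hlarge
      have hc : (0:ℝ) < n ^ 2 / 4 := by positivity
      have hx1 : (1:ℝ) ≤ n ^ (2 * β) := by
        calc (1:ℝ) = 1 ^ (2 * β) := (Real.one_rpow _).symm
          _ ≤ n ^ (2 * β) := Real.rpow_le_rpow zero_le_one hlarge hβ2'.le
      set A : ℝ≥0∞ := ENNReal.ofReal (108 * n ^ 4 * (n ^ (2 * β))⁻¹) with hA_def
      have hAne : A ≠ ⊤ := ENNReal.ofReal_ne_top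
      have hinner : ∀ s ∈ Set.Icc (0:ℝ) t,
          (∫⁻ s' in Set.Icc (0:ℝ) t,
            ENNReal.ofReal (n ^ 4 / 4 * Real.exp (-(2 * t - s - s') * n ^ 2 / 2) *
              |t - min s s'| ^ β)) ≤
          A * ENNReal.ofReal (n ^ 2 / 4)⁻¹ *
            ENNReal.ofReal (Real.exp (-(t - s) * (n ^ 2 / 4))) := by
        intro s hs
        calc (∫⁻ s' in Set.Icc (0:ℝ) t,
              ENNReal.ofReal (n ^ 4 / 4 * Real.exp (-(2 * t - s - s') * n ^ 2 / 2) *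
                |t - min s s'| ^ β))
            ≤ ∫⁻ s' in Set.Icc (0:ℝ) t,
                A * ENNReal.ofReal (Real.exp (-(t - s) * (n ^ 2 / 4))) *
                  ENNReal.ofReal (Real.exp (-(t - s') * (n ^ 2 / 4))) := by
              apply setLIntegral_mono' measurableSet_Icc
              intro s' hs'
              rw [hA_def, ← ENNReal.ofReal_mul (by positivity),
                ← ENNReal.ofReal_mul (by positivity)]
              apply ENNReal.ofReal_le_ofReal
              calc n ^ 4 / 4 * Real.exp (-(2 * t - s - s') * n ^ 2 / 2) * |t - min s s'| ^ β
                  ≤ 108 * n ^ 4 * (n ^ (2 * β))⁻¹ *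
                      (Real.exp (-(t - s) * (n ^ 2 / 4)) * Real.exp (-(t - s') * (n ^ 2 / 4))) :=
                    ptbound hβ hβ2 hs hs' hlarge
                _ = 108 * n ^ 4 * (n ^ (2 * β))⁻¹ * Real.exp (-(t - s) * (n ^ 2 / 4)) *
                      Real.exp (-(t - s') * (n ^ 2 / 4)) := by ring
          _ = A * ENNReal.ofReal (Real.exp (-(t - s) * (n ^ 2 / 4))) *
                ∫⁻ s' in Set.Icc (0:ℝ) t,
                  ENNReal.ofReal (Real.exp (-(t - s') * (n ^ 2 / 4))) :=
              lintegral_const_mul' _ _ (ENNReal.mul_ne_top hAne ENNReal.ofReal_ne_top)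
          _ ≤ A * ENNReal.ofReal (Real.exp (-(t - s) * (n ^ 2 / 4))) *
                ENNReal.ofReal (n ^ 2 / 4)⁻¹ := mul_le_mul_right (aux2 ht hc) _
          _ = A * ENNReal.ofReal (n ^ 2 / 4)⁻¹ *
                ENNReal.ofReal (Real.exp (-(t - s) * (n ^ 2 / 4))) := by ring
      calc (∫⁻ s in Set.Icc (0:ℝ) t, ∫⁻ s' in Set.Icc (0:ℝ) t,
            ENNReal.ofReal (n ^ 4 / 4 * Real.exp (-(2 * t - s - s') * n ^ 2 / 2) *
              |t - min s s'| ^ β))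
          ≤ ∫⁻ s in Set.Icc (0:ℝ) t,
              A * ENNReal.ofReal (n ^ 2 / 4)⁻¹ *
                ENNReal.ofReal (Real.exp (-(t - s) * (n ^ 2 / 4))) := by
            apply setLIntegral_mono' measurableSet_Icc
            exact hinner
        _ = A * ENNReal.ofReal (n ^ 2 / 4)⁻¹ *
              ∫⁻ s in Set.Icc (0:ℝ) t,
                ENNReal.ofReal (Real.exp (-(t - s) * (n ^ 2 / 4))) :=
            lintegral_const_mul' _ _ (ENNReal.mul_ne_top hAne ENNReal.ofReal_ne_top)
        _ ≤ A * ENNReal.ofReal (n ^ 2 / 4)⁻¹ * ENNReal.ofReal (n ^ 2 / 4)⁻¹ :=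
            mul_le_mul_right (aux2 ht hc) _
        _ ≤ ENNReal.ofReal C * ENNReal.ofReal ((1 + n ^ (2 * β))⁻¹) := by
            rw [hA_def, ← ENNReal.ofReal_mul (by positivity),
              ← ENNReal.ofReal_mul (by positivity), ← ENNReal.ofReal_mul hC0]
            apply ENNReal.ofReal_le_ofReal
            have hn4 : n ^ 4 ≠ 0 := by positivity
            have heq1 : 108 * n ^ 4 * (n ^ (2 * β))⁻¹ * (n ^ 2 / 4)⁻¹ * (n ^ 2 / 4)⁻¹
                = 1728 * (n ^ (2 * β))⁻¹ := by
              field_simp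
              ring
            rw [heq1]
            have hx0' : (0:ℝ) < n ^ (2 * β) := lt_of_lt_of_le one_pos hx1
            have h6 : 1728 * (n ^ (2 * β))⁻¹ ≤ 3456 * (1 + n ^ (2 * β))⁻¹ := by
              rw [show (1728:ℝ) * (n ^ (2 * β))⁻¹ = 1728 / n ^ (2 * β) by ring,
                show (3456:ℝ) * (1 + n ^ (2 * β))⁻¹ = 3456 / (1 + n ^ (2 * β)) by ring,
                div_le_div_iff₀ hx0' (by linarith)]
              linarith
            have h7 : 3456 * (1 + n ^ (2 * β))⁻¹ ≤ C * (1 + n ^ (2 * β))⁻¹ := by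
              apply mul_le_mul_of_nonneg_right ?_ (by positivity)
              have : (0:ℝ) ≤ t ^ β := Real.rpow_nonneg ht.le β
              rw [hC_def]; nlinarith [sq_nonneg t]
            linarith
  -- Tonelli swaps
  have swap1 : ∀ s : ℝ,
      (∫⁻ s' in Set.Icc (0:ℝ) t, ∫⁻ ξ,
        ENNReal.ofReal (‖ξ‖ ^ 4 / 4 * Real.exp (-(2 * t - s - s') * ‖ξ‖ ^ 2 / 2) *
          |t - min s s'| ^ β) ∂μ) =
      ∫⁻ ξ, (∫⁻ s' in Set.Icc (0:ℝ) t,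
        ENNReal.ofReal (‖ξ‖ ^ 4 / 4 * Real.exp (-(2 * t - s - s') * ‖ξ‖ ^ 2 / 2) *
          |t - min s s'| ^ β)) ∂μ := by
    intro s
    apply lintegral_lintegral_swap
    apply Measurable.aemeasurable
    have hmap : Continuous fun p : ℝ × EuclideanSpace ℝ (Fin d) =>
        (((s, p.1), p.2) : (ℝ × ℝ) × EuclideanSpace ℝ (Fin d)) :=
      (continuous_const.prodMk continuous_fst).prodMk continuous_snd
    exact (hgc.comp hmap).measurable.ennreal_ofReal
  have swap2 :
      (∫⁻ s in Set.Icc (0:ℝ) t, ∫⁻ ξ, (∫⁻ s' in Set.Icc (0:ℝ) t,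
        ENNReal.ofReal (‖ξ‖ ^ 4 / 4 * Real.exp (-(2 * t - s - s') * ‖ξ‖ ^ 2 / 2) *
          |t - min s s'| ^ β)) ∂μ) =
      ∫⁻ ξ, (∫⁻ s in Set.Icc (0:ℝ) t, ∫⁻ s' in Set.Icc (0:ℝ) t,
        ENNReal.ofReal (‖ξ‖ ^ 4 / 4 * Real.exp (-(2 * t - s - s') * ‖ξ‖ ^ 2 / 2) *
          |t - min s s'| ^ β)) ∂μ := by
    apply lintegral_lintegral_swap
    apply Measurable.aemeasurable
    apply Measurable.lintegral_prod_right'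
      (f := fun q : (ℝ × EuclideanSpace ℝ (Fin d)) × ℝ =>
        ENNReal.ofReal (‖q.1.2‖ ^ 4 / 4 *
          Real.exp (-(2 * t - q.1.1 - q.2) * ‖q.1.2‖ ^ 2 / 2) * |t - min q.1.1 q.2| ^ β))
    have hmap : Continuous fun q : (ℝ × EuclideanSpace ℝ (Fin d)) × ℝ =>
        (((q.1.1, q.2), q.1.2) : (ℝ × ℝ) × EuclideanSpace ℝ (Fin d)) :=
      ((continuous_fst.fst.prodMk continuous_snd)).prodMk continuous_fst.snd
    exact (hgc.comp hmap).measurable.ennreal_ofReal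
  calc (∫⁻ s in Set.Icc (0:ℝ) t, ∫⁻ s' in Set.Icc (0:ℝ) t, ∫⁻ ξ,
        ENNReal.ofReal (‖ξ‖ ^ 4 / 4 * Real.exp (-(2 * t - s - s') * ‖ξ‖ ^ 2 / 2) *
          |t - min s s'| ^ β) ∂μ)
      = ∫⁻ s in Set.Icc (0:ℝ) t, ∫⁻ ξ, (∫⁻ s' in Set.Icc (0:ℝ) t,
          ENNReal.ofReal (‖ξ‖ ^ 4 / 4 * Real.exp (-(2 * t - s - s') * ‖ξ‖ ^ 2 / 2) *
            |t - min s s'| ^ β)) ∂μ := lintegral_congr fun s => swap1 s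
    _ = ∫⁻ ξ, (∫⁻ s in Set.Icc (0:ℝ) t, ∫⁻ s' in Set.Icc (0:ℝ) t,
          ENNReal.ofReal (‖ξ‖ ^ 4 / 4 * Real.exp (-(2 * t - s - s') * ‖ξ‖ ^ 2 / 2) *
            |t - min s s'| ^ β)) ∂μ := swap2
    _ ≤ ∫⁻ ξ, ENNReal.ofReal C * ENNReal.ofReal ((1 + ‖ξ‖ ^ (2 * β))⁻¹) ∂μ :=
        lintegral_mono keybound
    _ = ENNReal.ofReal C * ∫⁻ ξ, ENNReal.ofReal ((1 + ‖ξ‖ ^ (2 * β))⁻¹) ∂μ :=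
        lintegral_const_mul' _ _ ENNReal.ofReal_ne_top
    _ < ⊤ := ENNReal.mul_lt_top ENNReal.ofReal_lt_top hμ
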